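/- Let p ≥ 1, let T be a bounded linear operator on L^p(ℝ^m; ℝⁿ) (with Lebesgue measure) that commutes with all translation operators τ_v : u ↦ u(· + v), and let h : ℝⁿ → ℝⁿ be Lipschitz with constant τ, h(0) = 0, where τ · ‖T‖_p ≤ 1/2. Suppose u, g ∈ L^p(ℝ^m; ℝⁿ) satisfy u = −T(h ∘ u) + g, and suppose there are L > 0 and r > 0 such that ‖g(· + v) − g‖_{L^p} ≤ L |v| for all v ∈ ℝ^m with |v| ≤ r. Then ‖u(· + v) − u‖_{L^p} ≤ 2L |v| for all v with |v| ≤ r. -/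
import Mathlib


open MeasureTheory
open scoped ENNReal NNReal

/-- Let `p ≥ 1`, let `T` be a bounded linear operator on
`L^p(ℝ^m; ℝⁿ)` (Lebesgue measure) commuting with all translation operators
`τ_v : u ↦ u(·+v)`, and let `h : ℝⁿ → ℝⁿ` be Lipschitz with constant `τ`, `h(0)=0`,
`τ·‖T‖ ≤ 1/2`.  If `u = −T(h∘u) + g` and `‖g(·+v) − g‖_{L^p} ≤ L|v|` for all `|v| ≤ r`,
then `‖u(·+v) − u‖_{L^p} ≤ 2L|v|` for all `|v| ≤ r`.
Here the translation operators are axiomatized as any family `S` of bounded operators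
on `L^p` with `(S v u)(x) = u(x+v)` almost everywhere. -/
theorem bishop_finite_difference_bound {m n : ℕ} (p : ℝ≥0∞) [Fact (1 ≤ p)]
    (T : Lp (EuclideanSpace ℝ (Fin n)) p (volume : Measure (EuclideanSpace ℝ (Fin m))) →L[ℝ]
         Lp (EuclideanSpace ℝ (Fin n)) p (volume : Measure (EuclideanSpace ℝ (Fin m))))
    -- the translation operators τ_v
    (S : EuclideanSpace ℝ (Fin m) →
      Lp (EuclideanSpace ℝ (Fin n)) p (volume : Measure (EuclideanSpace ℝ (Fin m))) →L[ℝ]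
      Lp (EuclideanSpace ℝ (Fin n)) p (volume : Measure (EuclideanSpace ℝ (Fin m))))
    (hS : ∀ v w, (S v w : EuclideanSpace ℝ (Fin m) → EuclideanSpace ℝ (Fin n))
      =ᵐ[volume] fun x => w (x + v))
    -- T commutes with all translations
    (hTS : ∀ v w, T (S v w) = S v (T w))
    (h : EuclideanSpace ℝ (Fin n) → EuclideanSpace ℝ (Fin n)) (τ : ℝ≥0)
    (hLip : LipschitzWith τ h) (h0 : h 0 = 0) (hsmall : (τ : ℝ) * ‖T‖ ≤ 1 / 2)
    (u g : Lp (EuclideanSpace ℝ (Fin n)) p (volume : Measure (EuclideanSpace ℝ (Fin m))))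
    (hu : u = -T (hLip.compLp h0 u) + g)
    (L r : ℝ) (hL : 0 < L) (hr : 0 < r)
    (hg : ∀ v : EuclideanSpace ℝ (Fin m), ‖v‖ ≤ r → ‖S v g - g‖ ≤ L * ‖v‖) :
    ∀ v : EuclideanSpace ℝ (Fin m), ‖v‖ ≤ r → ‖S v u - u‖ ≤ 2 * L * ‖v‖ := by
  intro v hv
  -- translation quasi-measure-preserving
  have hqmp : Measure.QuasiMeasurePreserving (fun x : EuclideanSpace ℝ (Fin m) => x + v)
      volume volume :=
    (measurePreserving_add_right volume v).quasiMeasurePreserving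
  -- key: S v (h ∘ u) = h ∘ (S v u) in Lp
  have key : S v (hLip.compLp h0 u) = hLip.compLp h0 (S v u) := by
    apply Lp.ext
    have e1 := hS v (hLip.compLp h0 u)
    have e2 : (fun x => (hLip.compLp h0 u : _ → EuclideanSpace ℝ (Fin n)) (x + v))
        =ᵐ[volume] fun x => h (u (x + v)) := hqmp.ae_eq_comp (hLip.coeFn_compLp h0 u)
    have e3 : (hLip.compLp h0 (S v u) : _ → EuclideanSpace ℝ (Fin n))
        =ᵐ[volume] fun x => h ((S v u) x) := hLip.coeFn_compLp h0 (S v u)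
    have e4 : (fun x => h ((S v u) x)) =ᵐ[volume] fun x => h (u (x + v)) :=
      (hS v u).mono fun x hx => congrArg h hx
    exact (e1.trans e2).trans (e3.trans e4).symm
  -- decompose S v u - u
  have hdecomp : S v u - u =
      -(T (S v (hLip.compLp h0 u) - hLip.compLp h0 u)) + (S v g - g) := by
    conv_lhs => rw [hu]
    rw [map_add, map_neg, ← hTS, map_sub]
    abel
  have hnorm1 : ‖S v (hLip.compLp h0 u) - hLip.compLp h0 u‖ ≤ (τ : ℝ) * ‖S v u - u‖ := by
    rw [key]
    exact hLip.norm_compLp_sub_le h0 _ _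
  have hbound : ‖S v u - u‖ ≤ ‖T‖ * ((τ : ℝ) * ‖S v u - u‖) + L * ‖v‖ := by
    calc ‖S v u - u‖ ≤ ‖-(T (S v (hLip.compLp h0 u) - hLip.compLp h0 u))‖ + ‖S v g - g‖ := by
          rw [hdecomp]; exact norm_add_le _ _
      _ ≤ ‖T‖ * ((τ : ℝ) * ‖S v u - u‖) + L * ‖v‖ := by
          refine add_le_add ?_ (hg v hv)
          rw [norm_neg]
          exact (T.le_opNorm _).trans
            (mul_le_mul_of_nonneg_left hnorm1 (norm_nonneg (T : _ →L[ℝ] _)))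
  have hA : (0 : ℝ) ≤ ‖S v u - u‖ := norm_nonneg _
  nlinarith [norm_nonneg T, hsmall, hbound]
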